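/- Let R be a ring, M an R-module, and (E, I), (F, J) linear filtrations of M. Then for each (i,j) ∈ I × J, (E ∩ F)^{<(i,j)} = (E^i ∩ F^{<j}) + (E^{<i} ∩ F^j), and the intersection filtration (E ∩ F, I × J) is distributive. -/
import Mathlib


/-- Let `R` be a ring, `M` an `R`-module, and `(E, I)`, `(F, J)` linear
filtrations of `M` (order-preserving maps from totally ordered sets into `Submodule R M`).
Then for each `(i,j) ∈ I × J`,
`(E ∩ F)^{<(i,j)} = (E i ⊓ F^{<j}) + (E^{<i} ⊓ F j)`,
and the intersection filtration `(E ∩ F, I × J)`, given by `(E ∩ F)^{(i,j)} = E i ⊓ F j`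
on the product order, is distributive: for every finite `Q ⊆ I × J` and every `p` maximal
in `Q`, `(E ∩ F)^p ⊓ Σ_{q ∈ Q \ {p}} (E ∩ F)^q ⊆ (E ∩ F)^{<p}`. -/
theorem stmt14
    {R : Type*} [Ring R] {M : Type*} [AddCommGroup M] [Module R M]
    {I : Type*} [LinearOrder I] {J : Type*} [LinearOrder J]
    (E : I → Submodule R M) (hE : Monotone E)
    (F : J → Submodule R M) (hF : Monotone F) :
    (∀ i : I, ∀ j : J,
      (⨆ p : I × J, ⨆ (_ : p < (i, j)), E p.1 ⊓ F p.2) =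
        (E i ⊓ ⨆ j' : J, ⨆ (_ : j' < j), F j') ⊔
          ((⨆ i' : I, ⨆ (_ : i' < i), E i') ⊓ F j)) ∧
    (∀ Q : Finset (I × J), ∀ p ∈ Q, (∀ q ∈ Q, p ≤ q → q = p) →
      (E p.1 ⊓ F p.2) ⊓ (⨆ q ∈ Q, ⨆ (_ : q ≠ p), E q.1 ⊓ F q.2) ≤
        ⨆ q : I × J, ⨆ (_ : q < p), E q.1 ⊓ F q.2) := by
  classical
  have h1 : ∀ i : I, ∀ j : J,
      (⨆ p : I × J, ⨆ (_ : p < (i, j)), E p.1 ⊓ F p.2) =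
        (E i ⊓ ⨆ j' : J, ⨆ (_ : j' < j), F j') ⊔
          ((⨆ i' : I, ⨆ (_ : i' < i), E i') ⊓ F j) := by
    intro i j
    apply le_antisymm
    · refine iSup₂_le fun q hq => ?_
      rcases lt_or_eq_of_le (show q.2 ≤ j from hq.le.2) with h2 | h2
      · exact le_sup_of_le_left (inf_le_inf (hE hq.le.1)
          (le_iSup₂ (f := fun j' (_ : j' < j) => F j') q.2 h2))
      · have h1' : q.1 < i := by
          rcases lt_or_eq_of_le (show q.1 ≤ i from hq.le.1) with h | h
          · exact h
          · exact absurd (Prod.ext h h2) hq.ne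
        exact le_sup_of_le_right (inf_le_inf
          (le_iSup₂ (f := fun i' (_ : i' < i) => E i') q.1 h1') (hF h2.le))
    · refine sup_le ?_ ?_
      · rintro x ⟨hx1, hx2⟩
        rw [iSup_subtype'] at hx2
        rcases isEmpty_or_nonempty {j' : J // j' < j} with he | hn
        · rw [iSup_of_empty] at hx2
          simpa using hx2.symm ▸ (Submodule.zero_mem _)
        · obtain ⟨⟨j', hj'⟩, hxj⟩ := Submodule.mem_iSup_of_directed _
            ((hF.comp (fun a b hab => Subtype.coe_le_coe.2 hab)).directed_le) |>.1 hx2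
          exact Submodule.mem_iSup_of_mem (i, j')
            (Submodule.mem_iSup_of_mem (Prod.mk_lt_mk_iff_right.2 hj') ⟨hx1, hxj⟩)
      · rintro x ⟨hx1, hx2⟩
        rw [iSup_subtype'] at hx1
        rcases isEmpty_or_nonempty {i' : I // i' < i} with he | hn
        · rw [iSup_of_empty] at hx1
          simpa using hx1.symm ▸ (Submodule.zero_mem _)
        · obtain ⟨⟨i', hi'⟩, hxi⟩ := Submodule.mem_iSup_of_directed _
            ((hE.comp (fun a b hab => Subtype.coe_le_coe.2 hab)).directed_le) |>.1 hx1
          exact Submodule.mem_iSup_of_mem (i', j)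
            (Submodule.mem_iSup_of_mem (Prod.mk_lt_mk_iff_left.2 hi') ⟨hxi, hx2⟩)
  refine ⟨h1, ?_⟩
  intro Q p hpQ hmax x hx
  obtain ⟨⟨hxE, hxF⟩, hxS⟩ := hx
  -- rewrite the supremum as over Q.erase p
  have hS : (⨆ q ∈ Q, ⨆ (_ : q ≠ p), E q.1 ⊓ F q.2)
      = ⨆ q ∈ Q.erase p, E q.1 ⊓ F q.2 := by
    apply le_antisymm
    · refine iSup₂_le fun q hq => iSup_le fun hq' => ?_
      exact le_iSup₂ (f := fun q (_ : q ∈ Q.erase p) => E q.1 ⊓ F q.2) q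
        (Finset.mem_erase.2 ⟨hq', hq⟩)
    · refine iSup₂_le fun q hq => ?_
      obtain ⟨hne, hmem⟩ := Finset.mem_erase.1 hq
      refine le_iSup_of_le q (le_iSup_of_le hmem (le_iSup_of_le hne le_rfl))
  rw [hS] at hxS
  obtain ⟨μ, hμ⟩ := (Submodule.mem_iSup_finset_iff_exists_sum _ x).1 hxS
  set A := (Q.erase p).filter (fun q => q.1 < p.1) with hA
  set B := (Q.erase p).filter (fun q => ¬ q.1 < p.1) with hB
  have hsplit : (∑ q ∈ A, (μ q : M)) + (∑ q ∈ B, (μ q : M)) = x := by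
    rw [← hμ, ← Finset.sum_filter_add_sum_filter_not (Q.erase p) (fun q => q.1 < p.1)]
  set a := ∑ q ∈ A, (μ q : M) with ha
  set b := ∑ q ∈ B, (μ q : M) with hb
  -- facts about A and B
  have hAlt : ∀ q ∈ A, q.1 < p.1 := fun q hq => (Finset.mem_filter.1 hq).2
  have hBlt : ∀ q ∈ B, q.2 < p.2 := by
    intro q hq
    obtain ⟨hq1, hq2⟩ := Finset.mem_filter.1 hq
    obtain ⟨hne, hmem⟩ := Finset.mem_erase.1 hq1
    have hnle : ¬ p ≤ q := fun h => hne (hmax q hmem h)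
    rw [Prod.le_def, not_and_or] at hnle
    rcases hnle with h | h
    · exact absurd (lt_of_not_ge h) hq2
    · exact lt_of_not_ge h
  have hamem : ∀ q ∈ A, (μ q : M) ∈ E q.1 ⊓ F q.2 := fun q hq => (μ q).2
  have haE : a ∈ E p.1 := Submodule.sum_mem _ fun q hq => hE (hAlt q hq).le ((μ q).2.1)
  have hbF : b ∈ F p.2 := Submodule.sum_mem _ fun q hq => hF (hBlt q hq).le ((μ q).2.2)
  have haE' : a ∈ ⨆ i' : I, ⨆ (_ : i' < p.1), E i' := by
    refine Submodule.sum_mem _ fun q hq => ?_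
    exact Submodule.mem_iSup_of_mem q.1 (Submodule.mem_iSup_of_mem (hAlt q hq) ((μ q).2.1))
  have hbF' : b ∈ ⨆ j' : J, ⨆ (_ : j' < p.2), F j' := by
    refine Submodule.sum_mem _ fun q hq => ?_
    exact Submodule.mem_iSup_of_mem q.2 (Submodule.mem_iSup_of_mem (hBlt q hq) ((μ q).2.2))
  have haF : a ∈ F p.2 := by
    have : a = x - b := by rw [← hsplit]; abel
    rw [this]; exact Submodule.sub_mem _ hxF hbF
  have hbE : b ∈ E p.1 := by
    have : b = x - a := by rw [← hsplit]; abel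
    rw [this]; exact Submodule.sub_mem _ hxE haE
  have := h1 p.1 p.2
  rw [show ((p.1, p.2) : I × J) = p from rfl] at this
  rw [this]
  rw [← hsplit]
  exact Submodule.add_mem _
    (Submodule.mem_sup_right ⟨haE', haF⟩)
    (Submodule.mem_sup_left ⟨hbE, hbF'⟩)
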